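/- arXiv:0806.0021 — 2 statements merged into one kernel-verified Lean document; each statement's English description precedes it below -/
import Mathlib

section
/- The Gaussian isoperimetric function satisfies the asymptotic formula lim_{t→0⁺} I(t) / (t (2 log(1/t))^{1/2}) = 1. -/
open MeasureTheory Real

/-- The standard one-dimensional Gaussian density `φ(x) = (2π)^{-1/2} e^{-x²/2}`. -/
noncomputable def gaussPdf (x : ℝ) : ℝ := (2 * Real.pi) ^ (-(1:ℝ)/2) * Real.exp (-x^2 / 2)

/-- The standard Gaussian cumulative distribution function `Φ(r) = ∫_{-∞}^r φ(t) dt`. -/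
noncomputable def gaussCdf (r : ℝ) : ℝ := ∫ t in Set.Iic r, gaussPdf t

/-- The inverse of `Φ`. -/
noncomputable def gaussCdfInv : ℝ → ℝ := Function.invFun gaussCdf

/-- The Gaussian isoperimetric function `I(t) = φ(Φ⁻¹(t))` on `(0,1)`, with `I(0)=I(1)=0`. -/
noncomputable def Igauss (t : ℝ) : ℝ :=
  if t = 0 ∨ t = 1 then 0 else gaussPdf (gaussCdfInv t)



open Filter Set

lemma gaussPdf_pos (x : ℝ) : 0 < gaussPdf x := by
  unfold gaussPdf
  positivity

lemma continuous_gaussPdf : Continuous gaussPdf := by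
  unfold gaussPdf
  continuity

lemma integrable_gaussPdf : Integrable gaussPdf := by
  have h : Integrable (fun x : ℝ => Real.exp (-(1/2) * x ^ 2)) := integrable_exp_neg_mul_sq (by norm_num)
  have := h.const_mul ((2 * Real.pi) ^ (-(1:ℝ)/2))
  refine this.congr ?_
  filter_upwards with x
  unfold gaussPdf
  ring_nf

lemma integral_gaussPdf : ∫ x, gaussPdf x = 1 := by
  unfold gaussPdf
  rw [MeasureTheory.integral_const_mul]
  have : ∀ x : ℝ, Real.exp (-x^2/2) = Real.exp (-(1/2) * x^2) := by intro x; ring_nf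
  simp_rw [this]
  rw [integral_gaussian]
  rw [show π / (1/2) = 2 * π by ring]
  rw [show ((2:ℝ)*π) ^ (-(1:ℝ)/2) = ((2*π) ^ ((1:ℝ)/2))⁻¹ by
    rw [← Real.rpow_neg (by positivity)]; norm_num]
  rw [Real.sqrt_eq_rpow]
  rw [inv_mul_eq_one₀ (by positivity)]

lemma gaussCdf_sub (a b : ℝ) : gaussCdf b - gaussCdf a = ∫ x in a..b, gaussPdf x :=
  intervalIntegral.integral_Iic_sub_Iic integrable_gaussPdf.integrableOn integrable_gaussPdf.integrableOn

lemma strictMono_gaussCdf : StrictMono gaussCdf := by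
  intro a b hab
  have h : 0 < ∫ x in a..b, gaussPdf x :=
    intervalIntegral.intervalIntegral_pos_of_pos_on
      (continuous_gaussPdf.intervalIntegrable a b) (fun x _ => gaussPdf_pos x) hab
  rw [← gaussCdf_sub] at h; linarith

lemma hasDerivAt_gaussCdf (r : ℝ) : HasDerivAt gaussCdf (gaussPdf r) r := by
  have h : ∀ u : ℝ, gaussCdf u = gaussCdf 0 + ∫ x in (0:ℝ)..u, gaussPdf x := by
    intro u; rw [← gaussCdf_sub]; ring
  have hd : HasDerivAt (fun u => ∫ x in (0:ℝ)..u, gaussPdf x) (gaussPdf r) r :=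
    intervalIntegral.integral_hasDerivAt_right (continuous_gaussPdf.intervalIntegrable 0 r)
      (continuous_gaussPdf.stronglyMeasurableAtFilter _ _) continuous_gaussPdf.continuousAt
  have := hd.const_add (gaussCdf 0)
  simpa [← h] using this

lemma continuous_gaussCdf : Continuous gaussCdf := by
  have : Differentiable ℝ gaussCdf := fun r => (hasDerivAt_gaussCdf r).differentiableAt
  exact this.continuous

lemma tendsto_gaussCdf_atBot : Tendsto gaussCdf atBot (nhds 0) := by
  have hbd : ∀ r ≤ (-2:ℝ), gaussCdf r ≤ (2 * Real.pi) ^ (-(1:ℝ)/2) * Real.exp r := by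
    intro r hr
    have h1 : gaussCdf r ≤ ∫ x in Iic r, (2 * Real.pi) ^ (-(1:ℝ)/2) * Real.exp x := by
      apply setIntegral_mono_on integrable_gaussPdf.integrableOn
        (((integrableOn_exp_Iic r).const_mul _)) measurableSet_Iic
      intro x hx
      simp only [mem_Iic] at hx
      unfold gaussPdf
      have hx2 : x ≤ -2 := hx.trans hr
      have : Real.exp (-x^2/2) ≤ Real.exp x := Real.exp_le_exp.2 (by nlinarith)
      have hc : (0:ℝ) ≤ (2 * Real.pi) ^ (-(1:ℝ)/2) := by positivity
      exact mul_le_mul_of_nonneg_left this hc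
    rwa [MeasureTheory.integral_const_mul, integral_exp_Iic] at h1
  have h0 : ∀ r, 0 ≤ gaussCdf r := by
    intro r
    apply setIntegral_nonneg measurableSet_Iic (fun x _ => (gaussPdf_pos x).le)
  have htop : Tendsto (fun r : ℝ => (2 * Real.pi) ^ (-(1:ℝ)/2) * Real.exp r) atBot (nhds 0) := by
    simpa using (Real.tendsto_exp_atBot).const_mul ((2 * Real.pi) ^ (-(1:ℝ)/2))
  apply tendsto_of_tendsto_of_tendsto_of_le_of_le' tendsto_const_nhds htop
  · exact Eventually.of_forall h0
  · exact eventually_atBot.2 ⟨-2, hbd⟩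

lemma gaussCdf_neg_eq (r : ℝ) : gaussCdf (-r) = 1 - gaussCdf r := by
  have hsum : gaussCdf r + ∫ x in Ioi r, gaussPdf x = 1 := by
    unfold gaussCdf
    rw [intervalIntegral.integral_Iic_add_Ioi integrable_gaussPdf.integrableOn
      integrable_gaussPdf.integrableOn, integral_gaussPdf]
  have heven : ∀ x : ℝ, gaussPdf (-x) = gaussPdf x := by
    intro x; unfold gaussPdf; rw [neg_pow]; ring_nf
  have h2 : (∫ x in Ioi r, gaussPdf x) = ∫ x in Iic (-r), gaussPdf x := by
    rw [← integral_comp_neg_Ioi]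
    simp_rw [heven]
  rw [h2] at hsum; unfold gaussCdf at hsum ⊢; linarith

lemma tendsto_gaussCdf_atTop : Tendsto gaussCdf atTop (nhds 1) := by
  have : Tendsto (fun r => 1 - gaussCdf (-r)) atTop (nhds (1 - 0)) :=
    (tendsto_const_nhds).sub (tendsto_gaussCdf_atBot.comp tendsto_neg_atTop_atBot)
  simp only [sub_zero] at this
  refine this.congr fun r => ?_
  rw [gaussCdf_neg_eq]; ring

lemma gaussCdf_pos (r : ℝ) : 0 < gaussCdf r := by
  have h := strictMono_gaussCdf (show r - 1 < r by linarith)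
  have h0 : 0 ≤ gaussCdf (r - 1) :=
    setIntegral_nonneg measurableSet_Iic (fun x _ => (gaussPdf_pos x).le)
  linarith

lemma gaussCdf_lt_one (r : ℝ) : gaussCdf r < 1 := by
  have h := strictMono_gaussCdf (show r < r + 1 by linarith)
  have h0 : gaussCdf (r + 1) ≤ 1 := by
    refine ge_of_tendsto tendsto_gaussCdf_atTop ?_
    refine eventually_atTop.2 ⟨r + 1, fun s hs => ?_⟩
    exact (strictMono_gaussCdf.monotone hs)
  linarith

lemma tendsto_one_div_atBot : Filter.Tendsto (fun r : ℝ => 1/r) atBot (nhds 0) := by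
  have h : Tendsto (fun r : ℝ => -r) atBot atTop := tendsto_neg_atBot_atTop
  have h2 : Tendsto (fun r : ℝ => (-r)⁻¹) atBot (nhds 0) := h.inv_tendsto_atTop
  have h3 := h2.neg
  simp only [neg_zero] at h3
  refine h3.congr fun r => ?_
  rw [one_div, ← inv_neg, neg_neg]

lemma hasDerivAt_gaussPdf (r : ℝ) : HasDerivAt gaussPdf (-r * gaussPdf r) r := by
  have h1 : HasDerivAt (fun x : ℝ => -x^2/2) (-r) r := by
    have h0 : HasDerivAt (fun x : ℝ => -x^2/2) (-(↑2 * r^1)/2) r :=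
      ((hasDerivAt_pow 2 r).neg).div_const 2
    convert h0 using 1
    push_cast
    ring
  have h2 : HasDerivAt (fun x : ℝ => Real.exp (-x^2/2)) (Real.exp (-r^2/2) * (-r)) r :=
    (Real.hasDerivAt_exp _).comp r h1
  have h3 := h2.const_mul ((2 * Real.pi) ^ (-(1:ℝ)/2))
  unfold gaussPdf
  refine h3.congr_deriv ?_
  ring

lemma tendsto_gaussPdf_atBot : Tendsto gaussPdf atBot (nhds 0) := by
  have hsq : Tendsto (fun r : ℝ => -r^2/2) atBot atBot := by
    have h : Tendsto (fun r : ℝ => r * r) atBot atTop :=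
      Filter.Tendsto.atBot_mul_atBot₀ tendsto_id tendsto_id
    have h2 : Tendsto (fun r : ℝ => -(r*r)/2) atBot atBot := by
      apply Tendsto.atBot_div_const (by norm_num)
      exact tendsto_neg_atTop_atBot.comp h
    refine h2.congr fun r => by ring
  have h3 : Tendsto (fun r : ℝ => Real.exp (-r^2/2)) atBot (nhds 0) :=
    Real.tendsto_exp_atBot.comp hsq
  have h4 := h3.const_mul ((2 * Real.pi) ^ (-(1:ℝ)/2))
  rw [mul_zero] at h4
  exact h4

lemma mills_upper : ∀ r < 0, -r * gaussCdf r < gaussPdf r := by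
  set h : ℝ → ℝ := fun r => gaussCdf r + gaussPdf r / r with hh
  have hderiv : ∀ r : ℝ, r ≠ 0 → HasDerivAt h (-gaussPdf r / r^2) r := by
    intro r hr
    have hd : HasDerivAt (fun x => gaussPdf x / x)
        ((-r * gaussPdf r * r - gaussPdf r * 1) / r^2) r :=
      (hasDerivAt_gaussPdf r).div (hasDerivAt_id r) hr
    have := (hasDerivAt_gaussCdf r).add hd
    refine this.congr_deriv ?_
    field_simp
    ring
  have hanti : StrictAntiOn h (Iio 0) := by
    apply strictAntiOn_of_deriv_neg (convex_Iio 0)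
    · apply ContinuousOn.add continuous_gaussCdf.continuousOn
      exact ContinuousOn.div continuous_gaussPdf.continuousOn continuousOn_id
        (fun x hx => ne_of_lt hx)
    · intro x hx
      rw [interior_Iio] at hx
      have hx' : x < 0 := hx
      rw [(hderiv x (ne_of_lt hx)).deriv]
      have h2 : (0:ℝ) < x^2 := by nlinarith [mul_pos (neg_pos.2 hx') (neg_pos.2 hx')]
      apply div_neg_of_neg_of_pos (by linarith [gaussPdf_pos x]) h2
  have hlim : Tendsto h atBot (nhds 0) := by
    have h1 : Tendsto (fun r : ℝ => gaussPdf r / r) atBot (nhds 0) := by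
      have := tendsto_gaussPdf_atBot.mul tendsto_one_div_atBot
      simp only [mul_zero] at this
      refine this.congr fun r => by rw [mul_one_div]
    have h3 := tendsto_gaussCdf_atBot.add h1
    rw [add_zero] at h3
    exact h3
  intro r hr
  have key : h r < 0 := by
    have h1 : h r < h (r - 1) := hanti (by simp; linarith) (by simp [hr]) (by linarith)
    have h2 : h (r - 1) ≤ 0 := by
      refine ge_of_tendsto hlim ?_
      refine eventually_atBot.2 ⟨r - 2, fun s hs => ?_⟩
      exact (hanti (by simp; linarith) (by simp; linarith) (by linarith)).le
    linarith
  have hr2 : gaussCdf r < -(gaussPdf r / r) := by simp only [hh] at key; linarith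
  have := mul_lt_mul_of_pos_left hr2 (show (0:ℝ) < -r by linarith)
  calc -r * gaussCdf r < -r * -(gaussPdf r / r) := this
    _ = gaussPdf r := by field_simp [ne_of_lt hr]

lemma mills_lower : ∀ r < 0, gaussPdf r * (1 - 1/r^2) < -r * gaussCdf r := by
  set g : ℝ → ℝ := fun r => gaussCdf r + gaussPdf r * (1/r - 1/r^3) with hg
  have hderiv : ∀ r : ℝ, r ≠ 0 → HasDerivAt g (3 * gaussPdf r / r^4) r := by
    intro r hr
    have hd1 : HasDerivAt (fun x : ℝ => 1/x - 1/x^3)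
        (-(1 / r^2) - (-(↑3 * r^2) / (r^3)^2)) r := by
      have ha : HasDerivAt (fun x : ℝ => 1/x) (-(1/r^2)) r := by
        simpa using (hasDerivAt_inv hr)
      have hb : HasDerivAt (fun x : ℝ => 1/x^3) (-(↑3 * r^2)/(r^3)^2) r := by
        have hc : HasDerivAt (fun x : ℝ => x^3) ((3:ℕ) * r^2) r := by
          simpa using hasDerivAt_pow 3 r
        simpa [one_div, Pi.inv_def] using (hc.inv (pow_ne_zero 3 hr))
      exact ha.sub hb
    have hd : HasDerivAt (fun x => gaussPdf x * (1/x - 1/x^3))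
        (-r * gaussPdf r * (1/r - 1/r^3) + gaussPdf r * (-(1 / r^2) - (-(↑3 * r^2) / (r^3)^2))) r :=
      (hasDerivAt_gaussPdf r).mul hd1
    have := (hasDerivAt_gaussCdf r).add hd
    refine this.congr_deriv ?_
    field_simp
    ring
  have hmono : StrictMonoOn g (Iio 0) := by
    apply strictMonoOn_of_deriv_pos (convex_Iio 0)
    · apply ContinuousOn.add continuous_gaussCdf.continuousOn
      apply ContinuousOn.mul continuous_gaussPdf.continuousOn
      apply ContinuousOn.sub
      · exact ContinuousOn.div continuousOn_const continuousOn_id (fun x hx => ne_of_lt hx)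
      · exact ContinuousOn.div continuousOn_const (by fun_prop)
          (fun x hx => pow_ne_zero 3 (ne_of_lt hx))
    · intro x hx
      rw [interior_Iio] at hx
      have hx' : x < 0 := hx
      rw [(hderiv x (ne_of_lt hx)).deriv]
      have h1 := gaussPdf_pos x
      have h2 : (0:ℝ) < x^2 := by nlinarith [mul_pos (neg_pos.2 hx') (neg_pos.2 hx')]
      have h4 : (0:ℝ) < x^4 := by nlinarith
      positivity
  have hlim : Tendsto g atBot (nhds 0) := by
    have h1 : Tendsto (fun r : ℝ => 1/r - 1/r^3) atBot (nhds 0) := by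
      have hb : Tendsto (fun r : ℝ => 1/r^3) atBot (nhds 0) := by
        have := tendsto_one_div_atBot.pow 3
        simp only [zero_pow, ne_eq, OfNat.ofNat_ne_zero, not_false_eq_true] at this
        refine this.congr fun r => by rw [div_pow, one_pow]
      have hc := tendsto_one_div_atBot.sub hb
      rw [sub_zero] at hc
      exact hc
    have h2 := tendsto_gaussPdf_atBot.mul h1
    rw [mul_zero] at h2
    have h3 := tendsto_gaussCdf_atBot.add h2
    rw [add_zero] at h3
    exact h3
  intro r hr
  have key : 0 < g r := by
    have h1 : g (r - 1) < g r := hmono (by simp; linarith) (by simp [hr]) (by linarith)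
    have h2 : 0 ≤ g (r - 1) := by
      refine le_of_tendsto hlim ?_
      refine eventually_atBot.2 ⟨r - 2, fun s hs => ?_⟩
      exact (hmono (by simp; linarith) (by simp; linarith) (by linarith)).le
    linarith
  have hr2 : -(gaussPdf r * (1/r - 1/r^3)) < gaussCdf r := by simp only [hg] at key; linarith
  have := mul_lt_mul_of_pos_left hr2 (show (0:ℝ) < -r by linarith)
  calc gaussPdf r * (1 - 1/r^2) = -r * -(gaussPdf r * (1/r - 1/r^3)) := by
        field_simp [ne_of_lt hr]
    _ < -r * gaussCdf r := this

noncomputable def Qr (r : ℝ) : ℝ := -r * gaussCdf r / gaussPdf r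

lemma tendsto_Qr : Tendsto Qr atBot (nhds 1) := by
  have hup : ∀ r < 0, Qr r < 1 := fun r hr =>
    (div_lt_one (gaussPdf_pos r)).2 (mills_upper r hr)
  have hlo : ∀ r < 0, 1 - 1/r^2 < Qr r := fun r hr =>
    (lt_div_iff₀ (gaussPdf_pos r)).2 (by linarith [mills_lower r hr])
  have hl : Tendsto (fun r : ℝ => 1 - 1/r^2) atBot (nhds 1) := by
    have h1 : Tendsto (fun r : ℝ => 1/r^2) atBot (nhds 0) := by
      have := tendsto_one_div_atBot.pow 2
      simp only [zero_pow, ne_eq, OfNat.ofNat_ne_zero, not_false_eq_true] at this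
      refine this.congr fun r => by rw [div_pow, one_pow]
    have h2 : Tendsto (fun r : ℝ => 1 - 1/r^2) atBot (nhds (1 - 0)) :=
      tendsto_const_nhds.sub h1
    simpa using h2
  apply tendsto_of_tendsto_of_tendsto_of_le_of_le' hl tendsto_const_nhds
  · exact eventually_atBot.2 ⟨-1, fun r hr => (hlo r (by linarith)).le⟩
  · exact eventually_atBot.2 ⟨-1, fun r hr => (hup r (by linarith)).le⟩

lemma Qr_pos : ∀ r ≤ -2, 0 < Qr r := by
  intro r hr
  have h2 : (1:ℝ)/r^2 ≤ 1/4 := by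
    rw [div_le_div_iff₀ (by nlinarith) (by norm_num)]
    nlinarith
  have hlo : 1 - 1/r^2 < Qr r := (lt_div_iff₀ (gaussPdf_pos r)).2
    (by linarith [mills_lower r (show r < 0 by linarith)])
  linarith

lemma log_one_div_gaussCdf (r : ℝ) (hr : r < 0) (hQ : 0 < Qr r) :
    Real.log (1 / gaussCdf r)
      = r^2/2 + (1/2) * Real.log (2*Real.pi) + Real.log (-r) - Real.log (Qr r) := by
  have hΦ := gaussCdf_pos r
  have hφ := gaussPdf_pos r
  have hr' : r ≠ 0 := ne_of_lt hr
  have hcdf : gaussCdf r = Qr r * gaussPdf r / (-r) := by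
    unfold Qr
    field_simp
  rw [one_div, Real.log_inv, hcdf, Real.log_div (by positivity) (by linarith),
    Real.log_mul (ne_of_gt hQ) (ne_of_gt hφ)]
  have hlogφ : Real.log (gaussPdf r) = -(1/2) * Real.log (2*Real.pi) - r^2/2 := by
    unfold gaussPdf
    rw [Real.log_mul (by positivity) (by positivity), Real.log_rpow (by positivity),
      Real.log_exp]
    ring
  rw [hlogφ]
  ring

lemma tendsto_twoL : Tendsto (fun r => 2 * Real.log (1/gaussCdf r) / r^2) atBot (nhds 1) := by
  have h1r2 : Tendsto (fun r : ℝ => 1/r^2) atBot (nhds 0) := by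
    have := tendsto_one_div_atBot.pow 2
    simp only [zero_pow, ne_eq, OfNat.ofNat_ne_zero, not_false_eq_true] at this
    refine this.congr fun r => by rw [div_pow, one_pow]
  have hlognegr : Tendsto (fun r : ℝ => Real.log (-r) / r^2) atBot (nhds 0) := by
    have h1 : Tendsto (fun t : ℝ => Real.log t / (1 * t + 0)) atTop (nhds 0) := by
      simpa using Real.tendsto_pow_log_div_mul_add_atTop 1 0 1 one_ne_zero
    have h2 : Tendsto (fun t : ℝ => (Real.log t / t) * (1/t)) atTop (nhds 0) := by
      have := h1.mul tendsto_inv_atTop_zero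
      simp only [one_mul, add_zero, mul_zero, one_div] at this ⊢
      exact this
    have h3 := h2.comp tendsto_neg_atBot_atTop
    simp only [Function.comp_def] at h3
    refine h3.congr' ?_
    filter_upwards [eventually_le_atBot (-1 : ℝ)] with r hr
    show Real.log (-r) / -r * (1 / -r) = Real.log (-r) / r^2
    rw [div_mul_div_comm]
    congr 1 <;> ring
  have hlogQ : Tendsto (fun r : ℝ => Real.log (Qr r)) atBot (nhds 0) := by
    have := (Real.continuousAt_log one_ne_zero).tendsto.comp tendsto_Qr
    simpa [Function.comp_def] using this
  have hmain : Tendsto (fun r : ℝ =>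
      1 + (Real.log (2*Real.pi) * (1/r^2) + 2 * (Real.log (-r)/r^2)
        - 2 * (Real.log (Qr r) * (1/r^2)))) atBot (nhds (1 + (Real.log (2*Real.pi) * 0 + 2*0 - 2*(0*0)))) := by
    apply tendsto_const_nhds.add
    apply Tendsto.sub
    · exact (h1r2.const_mul _).add (hlognegr.const_mul 2)
    · exact (hlogQ.mul h1r2).const_mul 2
  simp only [mul_zero, add_zero, sub_zero, zero_mul] at hmain
  refine hmain.congr' ?_
  filter_upwards [eventually_le_atBot (-2 : ℝ)] with r hr
  have hr0 : r < 0 := by linarith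
  have hQ := Qr_pos r hr
  rw [log_one_div_gaussCdf r hr0 hQ]
  have : r ≠ 0 := ne_of_lt hr0
  field_simp
  ring

lemma tendsto_sqrt_part :
    Tendsto (fun r => Real.sqrt (2 * Real.log (1/gaussCdf r)) / (-r)) atBot (nhds 1) := by
  have h := (Real.continuous_sqrt.tendsto 1).comp tendsto_twoL
  simp only [Real.sqrt_one, Function.comp] at h
  refine h.congr' ?_
  filter_upwards [eventually_le_atBot (-1 : ℝ)] with r hr
  have hr0 : r < 0 := by linarith
  have hL : 0 ≤ 2 * Real.log (1/gaussCdf r) := by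
    have h1 : 1 < 1/gaussCdf r := by
      rw [lt_div_iff₀ (gaussCdf_pos r)]
      simpa using gaussCdf_lt_one r
    have := Real.log_pos h1
    linarith
  show Real.sqrt (2 * Real.log (1/gaussCdf r) / r^2) = _
  rw [Real.sqrt_div hL, Real.sqrt_sq_eq_abs, abs_of_neg hr0]

lemma tendsto_F : Tendsto (fun r => gaussPdf r /
    (gaussCdf r * Real.sqrt (2 * Real.log (1/gaussCdf r)))) atBot (nhds 1) := by
  have h1 := (tendsto_Qr.inv₀ one_ne_zero).mul (tendsto_sqrt_part.inv₀ one_ne_zero)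
  simp only [inv_one, mul_one] at h1
  refine h1.congr' ?_
  filter_upwards [eventually_le_atBot (-2 : ℝ)] with r hr
  have hr0 : r < 0 := by linarith
  have hQ := Qr_pos r hr
  have hφ := gaussPdf_pos r
  have hΦ := gaussCdf_pos r
  have hS : 0 < Real.sqrt (2 * Real.log (1/gaussCdf r)) := by
    apply Real.sqrt_pos.2
    have h1 : 1 < 1/gaussCdf r := by
      rw [lt_div_iff₀ hΦ]; simpa using gaussCdf_lt_one r
    have := Real.log_pos h1
    linarith
  have hr' : r ≠ 0 := ne_of_lt hr0
  unfold Qr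
  rw [eq_comm]
  field_simp


lemma gaussCdf_surj {t : ℝ} (h0 : 0 < t) (h1 : t < 1) : ∃ r, gaussCdf r = t := by
  obtain ⟨a, ha⟩ : ∃ a, gaussCdf a < t := by
    have := tendsto_gaussCdf_atBot.eventually_lt_const h0
    exact this.exists
  obtain ⟨b, hb⟩ : ∃ b, t < gaussCdf b := by
    have := tendsto_gaussCdf_atTop.eventually_const_lt h1
    exact this.exists
  have hab : a ≤ b := by
    by_contra hc
    push_neg at hc
    have := strictMono_gaussCdf hc
    linarith
  have := intermediate_value_Icc hab continuous_gaussCdf.continuousOn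
  have ht : t ∈ Icc (gaussCdf a) (gaussCdf b) := ⟨ha.le, hb.le⟩
  obtain ⟨r, _, hr⟩ := this ht
  exact ⟨r, hr⟩

lemma gaussCdf_invFun_eq {t : ℝ} (h0 : 0 < t) (h1 : t < 1) : gaussCdf (gaussCdfInv t) = t :=
  Function.invFun_eq (gaussCdf_surj h0 h1)

lemma gaussCdfInv_lt {t : ℝ} (M : ℝ) (h0 : 0 < t) (hM : t < gaussCdf M) :
    gaussCdfInv t < M := by
  have h1 : t < 1 := hM.trans (gaussCdf_lt_one M)
  have := gaussCdf_invFun_eq h0 h1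
  by_contra hc
  push_neg at hc
  have := strictMono_gaussCdf.monotone hc
  linarith

lemma tendsto_gaussCdfInv : Tendsto gaussCdfInv (nhdsWithin 0 (Set.Ioi 0)) atBot := by
  rw [tendsto_atBot]
  intro M
  have hmem : Ioo (0:ℝ) (gaussCdf (M - 1)) ∈ nhdsWithin 0 (Set.Ioi 0) :=
    Ioo_mem_nhdsGT_of_mem ⟨le_refl _, gaussCdf_pos (M - 1)⟩
  filter_upwards [hmem] with t ht
  exact (gaussCdfInv_lt (M - 1) ht.1 ht.2).le.trans (by linarith)

/-- Asymptotics of the Gaussian isoperimetric function at the origin: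
`lim_{t→0⁺} I(t)/(t (2 log(1/t))^{1/2}) = 1`. -/
theorem gaussian_isoperimetric_asymptotics :
    Filter.Tendsto (fun t : ℝ => Igauss t / (t * Real.sqrt (2 * Real.log (1/t))))
      (nhdsWithin 0 (Set.Ioi 0)) (nhds 1) := by
  have hcomp := tendsto_F.comp tendsto_gaussCdfInv
  refine hcomp.congr' ?_
  have hmem : Ioo (0:ℝ) 1 ∈ nhdsWithin 0 (Set.Ioi 0) :=
    Ioo_mem_nhdsGT_of_mem ⟨le_refl _, one_pos⟩
  filter_upwards [hmem] with t ht
  have h0 := ht.1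
  have h1 := ht.2
  have heq : gaussCdf (gaussCdfInv t) = t := gaussCdf_invFun_eq h0 h1
  show gaussPdf (gaussCdfInv t) / (gaussCdf (gaussCdfInv t) *
      Real.sqrt (2 * Real.log (1 / gaussCdf (gaussCdfInv t)))) = _
  rw [heq]
  unfold Igauss
  rw [if_neg (by push_neg; exact ⟨ne_of_gt h0, ne_of_lt h1⟩)]
end

section
/- Let (Ω, μ) be a probability space and g ≥ 0 a μ-integrable function with g log g integrable. Then the entropy satisfies Ent(g) ≥ -log(μ{g ≠ 0}) · ∫ g dμ. -/
open MeasureTheory Real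

/-- Lower bound for the entropy `Ent(g) = ∫ g log g dμ - (∫ g dμ) log(∫ g dμ)` on a
probability space: `Ent(g) ≥ -log(μ{g ≠ 0}) ∫ g dμ`. -/
theorem entropy_lower_bound {Ω : Type*} [MeasurableSpace Ω] (μ : Measure Ω)
    [IsProbabilityMeasure μ] (g : Ω → ℝ) (hg : ∀ x, 0 ≤ g x)
    (h1 : Integrable g μ)
    (h2 : Integrable (fun x => g x * Real.log (g x)) μ) :
    -(Real.log ((μ {x | g x ≠ 0}).toReal)) * (∫ x, g x ∂μ) ≤
      (∫ x, g x * Real.log (g x) ∂μ) - (∫ x, g x ∂μ) * Real.log (∫ x, g x ∂μ) := by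
  set I := ∫ x, g x ∂μ with hIdef
  have hI0 : 0 ≤ I := integral_nonneg hg
  rcases eq_or_lt_of_le hI0 with hI0' | hIpos
  · -- case ∫ g = 0 : g = 0 a.e.
    have hg0 : g =ᵐ[μ] 0 := (integral_eq_zero_iff_of_nonneg hg h1).mp hI0'.symm
    have h3 : (fun x => g x * Real.log (g x)) =ᵐ[μ] 0 := by
      filter_upwards [hg0] with x hx
      simp [hx]
    rw [← hI0', integral_congr_ae h3]
    simp
  · obtain ⟨g', hg'sm, hg'⟩ := h1.aestronglyMeasurable
    set A : Set Ω := {x | g' x ≠ 0} with hAdef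
    have hA : MeasurableSet A := (hg'sm.measurable (measurableSet_singleton (0:ℝ))).compl
    have hAA' : μ {x | g x ≠ 0} = μ A := by
      refine measure_congr ?_
      refine (Filter.eventuallyEq_set).2 ?_
      filter_upwards [hg'] with x hx
      simp [hAdef, Set.mem_setOf_eq, hx]
    have hAne : μ A ≠ 0 := by
      intro h
      have hg'0 : ∀ᵐ x ∂μ, g' x = 0 := by
        rw [ae_iff]; exact h
      have hg0 : g =ᵐ[μ] 0 := by
        filter_upwards [hg', hg'0] with x hx hx0
        simp [hx, hx0]
      have : I = 0 := by
        rw [hIdef, integral_congr_ae hg0]; simp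
      linarith
    set m : ℝ := (μ A).toReal with hmdef
    have hm : 0 < m := ENNReal.toReal_pos hAne (measure_ne_top μ A)
    set b : ℝ := I / m with hbdef
    have hb : 0 < b := div_pos hIpos hm
    -- pointwise a.e. inequality
    have key : ∀ᵐ x ∂μ, Set.indicator A (fun y => g y - b) x ≤
        g x * Real.log (g x) - g x * Real.log b := by
      filter_upwards [hg'] with x hx
      by_cases hxA : x ∈ A
      · rw [Set.indicator_of_mem hxA]
        have hgx : 0 < g x := by
          rcases (hg x).lt_or_eq with h | h
          · exact h
          · exact absurd (hx ▸ h.symm : g' x = 0) hxA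
        have hlog : Real.log (b / g x) ≤ b / g x - 1 :=
          Real.log_le_sub_one_of_pos (div_pos hb hgx)
        rw [Real.log_div hb.ne' hgx.ne'] at hlog
        have h4 := mul_le_mul_of_nonneg_left hlog hgx.le
        have h5 : g x * (b / g x - 1) = b - g x := by field_simp
        rw [h5] at h4
        nlinarith
      · rw [Set.indicator_of_notMem hxA]
        have hx0 : g x = 0 := by
          have : g' x = 0 := not_not.mp hxA
          rw [hx, this]
        simp [hx0]
    have hint1 : Integrable (Set.indicator A (fun y => g y - b)) μ :=
      (h1.sub (integrable_const b)).indicator hA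
    have hint2 : Integrable (fun x => g x * Real.log (g x) - g x * Real.log b) μ :=
      h2.sub (h1.mul_const _)
    have hmono := integral_mono_ae hint1 hint2 key
    -- compute left integral
    have hgind : Set.indicator A g =ᵐ[μ] g := by
      filter_upwards [hg'] with x hx
      by_cases hxA : x ∈ A
      · simp [Set.indicator_of_mem hxA]
      · have : g' x = 0 := not_not.mp hxA
        simp [Set.indicator_of_notMem hxA, hx, this]
    have hintA : ∫ x in A, g x ∂μ = I := by
      rw [← integral_indicator hA]
      exact integral_congr_ae hgind
    have hleft : ∫ x, Set.indicator A (fun y => g y - b) x ∂μ = 0 := by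
      rw [integral_indicator hA,
        integral_sub h1.integrableOn (integrableOn_const (measure_ne_top μ A)),
        hintA, setIntegral_const]
      rw [hbdef, show μ.real A = m from rfl, smul_eq_mul]
      rw [mul_div_cancel₀ I hm.ne', sub_self]
    have hright : ∫ x, (g x * Real.log (g x) - g x * Real.log b) ∂μ =
        (∫ x, g x * Real.log (g x) ∂μ) - I * Real.log b := by
      rw [integral_sub h2 (h1.mul_const _), integral_mul_const]
    rw [hleft, hright] at hmono
    have hlogb : Real.log b = Real.log I - Real.log m :=
      Real.log_div hIpos.ne' hm.ne'
    rw [hlogb] at hmono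
    rw [hAA', ← hmdef]
    nlinarith [hmono]
end
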